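/- If X is a sub-uniform random variable, then for every α ∈ [0,1/2] one has P(X ≤ α) ≤ 2α. -/

import Mathlib

open MeasureTheory Set

/-- A real-valued random variable `X` on a probability space `(Ω, P)` is *sub-uniform*
if it is dominated in the convex order by the uniform distribution `U` on `[0,1]`:
`E[h(X)] ≤ E[h(U)]` for every convex `h : ℝ → ℝ` for which both expectations exist.
(The expectation `E[h(X)]` exists, with a value in `(-∞, ∞]`, precisely when the
negative part of `h ∘ X` is integrable; in that case the inequality
`E[h(X)] ≤ E[h(U)] < ∞` forces `h ∘ X` to be integrable.  The expectation `E[h(U)]`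
always exists, since a convex function on `ℝ` is continuous, hence bounded on `[0,1]`.) -/
def SubUniform {Ω : Type*} [MeasurableSpace Ω] (P : Measure Ω) (X : Ω → ℝ) : Prop :=
  ∀ h : ℝ → ℝ, ConvexOn ℝ Set.univ h →
    Integrable (fun ω => max (-(h (X ω))) 0) P →
    Integrable (fun ω => h (X ω)) P ∧
      ∫ ω, h (X ω) ∂P ≤ ∫ x in Set.Icc (0:ℝ) 1, h x ∂volume

lemma subUniform_cdf_le_aux {Ω : Type*} [MeasurableSpace Ω] (P : Measure Ω)
    [IsProbabilityMeasure P] (X : Ω → ℝ) (hX : Measurable X) (hsub : SubUniform P X)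
    (β : ℝ) (hβ0 : 0 < β) (hβ1 : β ≤ 1/2) :
    (P {ω | X ω ≤ β}).toReal ≤ 2 * β := by
  set h : ℝ → ℝ := fun x => max (2*β - x) 0 with hh
  have hconv : ConvexOn ℝ Set.univ h := by
    have h1 : ConvexOn ℝ (Set.univ : Set ℝ) (fun x => 2*β - x) :=
      (convexOn_const _ convex_univ).sub (concaveOn_id convex_univ)
    have h2 : ConvexOn ℝ (Set.univ : Set ℝ) (fun _ : ℝ => (0:ℝ)) :=
      convexOn_const _ convex_univ
    exact h1.sup h2
  have hneg : Integrable (fun ω => max (-(h (X ω))) 0) P := by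
    have hz : (fun ω : Ω => max (-(h (X ω))) 0) = fun _ => 0 := by
      funext ω
      exact max_eq_right (neg_nonpos.mpr (le_max_right _ _))
    rw [hz]; exact integrable_const 0
  obtain ⟨hint, hle⟩ := hsub h hconv hneg
  have hcont : Continuous h := (continuous_const.sub continuous_id).max continuous_const
  have hc1 : 2*β ≤ 1 := by linarith
  have hc0 : (0:ℝ) ≤ 2*β := by linarith
  have hRHS : ∫ x in Set.Icc (0:ℝ) 1, h x ∂volume = 2 * β^2 := by
    rw [integral_Icc_eq_integral_Ioc,
      ← intervalIntegral.integral_of_le (by norm_num : (0:ℝ) ≤ 1)]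
    rw [← intervalIntegral.integral_add_adjacent_intervals
      (a := (0:ℝ)) (b := 2*β) (c := 1)
      (hcont.intervalIntegrable _ _) (hcont.intervalIntegrable _ _)]
    have e1 : ∫ x in (0:ℝ)..(2*β), h x = ∫ x in (0:ℝ)..(2*β), (2*β - x) := by
      apply intervalIntegral.integral_congr
      intro x hx
      rw [Set.uIcc_of_le hc0] at hx
      exact max_eq_left (by linarith [hx.2])
    have e2 : ∫ x in (2*β)..(1:ℝ), h x = 0 := by
      rw [show (0:ℝ) = ∫ _x in (2*β)..(1:ℝ), (0:ℝ) by simp]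
      apply intervalIntegral.integral_congr
      intro x hx
      rw [Set.uIcc_of_le hc1] at hx
      exact max_eq_right (by linarith [hx.1])
    rw [e1, e2,
      intervalIntegral.integral_sub intervalIntegrable_const
        (continuous_id'.intervalIntegrable _ _), integral_id,
      intervalIntegral.integral_const]
    simp only [smul_eq_mul]
    ring
  set s : Set Ω := {ω | X ω ≤ β} with hs
  have hsm : MeasurableSet s := hX measurableSet_Iic
  have hlow : β * (P s).toReal ≤ ∫ ω, h (X ω) ∂P := by
    have hind : ∫ ω, s.indicator (fun _ => β) ω ∂P = (P s).toReal * β := by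
      rw [integral_indicator_const _ hsm]; simp [smul_eq_mul, measureReal_def]
    calc β * (P s).toReal = ∫ ω, s.indicator (fun _ => β) ω ∂P := by rw [hind]; ring
    _ ≤ ∫ ω, h (X ω) ∂P := by
        apply integral_mono
        · exact (integrable_const β).indicator hsm
        · exact hint
        · intro ω
          by_cases hω : ω ∈ s
          · rw [Set.indicator_of_mem hω]
            have hXω : X ω ≤ β := hω
            exact le_max_of_le_left (by linarith)
          · rw [Set.indicator_of_notMem hω]
            exact le_max_right _ _
  have hfinal : β * (P s).toReal ≤ 2 * β^2 := hlow.trans (hle.trans_eq hRHS)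
  nlinarith [hfinal, hβ0]

/-- If `X` is a sub-uniform random variable, then for every `α ∈ [0, 1/2]` one has
`P(X ≤ α) ≤ 2α`. -/
theorem subUniform_cdf_le {Ω : Type*} [MeasurableSpace Ω] (P : Measure Ω)
    [IsProbabilityMeasure P] (X : Ω → ℝ) (hX : Measurable X) (hsub : SubUniform P X)
    (α : ℝ) (hα : α ∈ Set.Icc (0:ℝ) (1/2)) :
    P {ω | X ω ≤ α} ≤ ENNReal.ofReal (2 * α) := by
  obtain ⟨hα0, hα2⟩ := hα
  have hfin : P {ω | X ω ≤ α} ≠ ⊤ := measure_ne_top _ _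
  rw [← ENNReal.ofReal_toReal hfin]
  apply ENNReal.ofReal_le_ofReal
  rcases eq_or_lt_of_le hα0 with h0 | h0
  · -- α = 0
    have key : ∀ β : ℝ, 0 < β → β ≤ 1/2 → (P {ω | X ω ≤ α}).toReal ≤ 2*β := by
      intro β hb hb2
      refine le_trans ?_ (subUniform_cdf_le_aux P X hX hsub β hb hb2)
      refine ENNReal.toReal_mono (measure_ne_top _ _) (measure_mono ?_)
      intro ω hω
      simp only [Set.mem_setOf_eq] at hω ⊢
      linarith
    have hz : (P {ω | X ω ≤ α}).toReal ≤ 0 := by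
      refine le_of_forall_pos_le_add ?_
      intro ε hε
      have hmin : (0:ℝ) < min (ε/2) (1/2) := lt_min (by linarith) (by norm_num)
      have := key (min (ε/2) (1/2)) hmin (min_le_right _ _)
      have h2 : 2 * min (ε/2) (1/2) ≤ ε := by
        have := min_le_left (ε/2) (1/2); linarith
      linarith
    linarith
  · exact subUniform_cdf_le_aux P X hX hsub α h0 hα2
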